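/- Let m ≥ 2, 1 ≤ ℓ ≤ m, and let (f_1, …, f_ℓ) be a (2m, ℓ) bent vectorial function on GF(2^{2m}). Fix a codeword u of C(f_1, …, f_ℓ) of Hamming weight 2^{2m−1} − 2^{m−1} and let B = supp(u). Then for every two distinct elements x, y of B, the number of codewords v of weight 2^{2m−1} − 2^{m−1} with |B ∩ supp(v)| = 2^{2m−2} − 2^{m−1} and with x, y ∈ supp(v) is exactly 2^{2m−2} − 2^{m−1} − 1; that is, the intersections B ∩ supp(v) over all such v form a 2-(2^{2m−1} − 2^{m−1}, 2^{2m−2} − 2^{m−1}, 2^{2m−2} − 2^{m−1} − 1) design on the point set B. -/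

import Mathlib

noncomputable section

/-- The finite field `GF(2^n)` is finite. -/
instance (n : ℕ) : Fintype (GaloisField 2 n) := Fintype.ofFinite _

/-- The absolute trace map from `GF(2^(2m))` to `GF(2)`. -/
def tr (m : ℕ) (x : GaloisField 2 (2*m)) : ZMod 2 :=
  Algebra.trace (ZMod 2) (GaloisField 2 (2*m)) x

/-- A Boolean function `f : GF(2^(2m)) → GF(2)` is bent if all its Walsh
transform values have absolute value `2^m`. -/
def IsBent (m : ℕ) (f : GaloisField 2 (2*m) → ZMod 2) : Prop :=
  ∀ w : GaloisField 2 (2*m),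
    |∑ x : GaloisField 2 (2*m), (-1 : ℤ) ^ ((f x + tr m (w * x)).val)| = 2 ^ m

/-- A tuple `(f 0, …, f (ℓ-1))` of Boolean functions on `GF(2^(2m))` is a
`(2m, ℓ)` bent vectorial function if every nonzero `GF(2)`-linear combination
of the `f j` is bent. -/
def IsBentVectorial (m ℓ : ℕ) (f : Fin ℓ → GaloisField 2 (2*m) → ZMod 2) : Prop :=
  ∀ a : Fin ℓ → ZMod 2, a ≠ 0 → IsBent m (fun x => ∑ j, a j * f j x)

/-- The binary linear code `C(f 0, …, f (ℓ-1))` of length `2^(2m)` (with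
coordinates indexed by `GF(2^(2m))`, a codeword being a function
`GF(2^(2m)) → GF(2)`, i.e. the truth table of a Boolean function), spanned by
the truth tables of the `f j`, the truth tables of the linear functions
`x ↦ tr (w * x)` for all `w`, and the all-one vector. -/
def code (m ℓ : ℕ) (f : Fin ℓ → GaloisField 2 (2*m) → ZMod 2) :
    Submodule (ZMod 2) (GaloisField 2 (2*m) → ZMod 2) :=
  Submodule.span (ZMod 2)
    (Set.range f ∪ Set.range (fun w => fun x => tr m (w * x)) ∪ {fun _ => (1 : ZMod 2)})

/-- The Hamming weight of a codeword: the number of nonzero coordinates. -/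
def wt (m : ℕ) (c : GaloisField 2 (2*m) → ZMod 2) : ℕ :=
  {x | c x ≠ 0}.ncard

/-- The support of a codeword: the set of coordinates where it is nonzero. -/
def supp (m : ℕ) (c : GaloisField 2 (2*m) → ZMod 2) : Set (GaloisField 2 (2*m)) :=
  {x | c x ≠ 0}

-- ZMod 2 facts
lemma z1 : ∀ a : ZMod 2, a ≠ 0 → a = 1 := by decide
lemma z2 : ∀ a b : ZMod 2, (-1:ℤ)^((a+b).val) = (-1)^a.val * (-1)^b.val := by decide
lemma z3 : ∀ a : ZMod 2, (-1:ℤ)^a.val = 1 - 2*a.val := by decide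
lemma z4 : ∀ a b : ZMod 2, ((a+b).val:ℤ) = a.val + b.val - 2*((a*b).val) := by decide
lemma z5 : ∀ a b : ZMod 2, (4:ℤ)*((a*b).val) = (1-(-1)^a.val)*(1-(-1)^b.val) := by decide
lemma z6 : ∀ a : ZMod 2, a + a = 0 := by decide
lemma z7 : ∀ a b : ZMod 2, a + b = 0 → b = a := by decide
lemma z8 : ∀ e : ZMod 2, (-1:ℤ)^e.val = 1 → e = 0 := by decide

lemma zval1 : (1 : ZMod 2).val = 1 := rfl

lemma gf_add_self {m : ℕ} (x : GaloisField 2 (2*m)) : x + x = 0 := by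
  have h : (2 : GaloisField 2 (2*m)) = 0 := by
    simpa using (CharP.cast_eq_zero (GaloisField 2 (2*m)) 2)
  linear_combination x * h

lemma gf_card {m : ℕ} (hm : m ≠ 0) : Fintype.card (GaloisField 2 (2*m)) = 2^(2*m) := by
  have := GaloisField.card 2 (2*m) (by omega)
  simpa [Nat.card_eq_fintype_card] using this

instance (m : ℕ) : Algebra.IsSeparable (ZMod 2) (GaloisField 2 (2*m)) := by
  have : Algebra.IsAlgebraic (ZMod 2) (GaloisField 2 (2*m)) := Algebra.IsAlgebraic.of_finite _ _
  exact Algebra.IsAlgebraic.isSeparable_of_perfectField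

lemma tr_add {m : ℕ} (a b : GaloisField 2 (2*m)) : tr m (a+b) = tr m a + tr m b :=
  map_add _ _ _

lemma tr_zero {m : ℕ} : tr m 0 = 0 := map_zero _

lemma exists_tr_one (m : ℕ) : ∃ t : GaloisField 2 (2*m), tr m t = 1 := by
  have h := Algebra.trace_ne_zero (ZMod 2) (GaloisField 2 (2*m))
  have h2 : ∃ t, tr m t ≠ 0 := by
    by_contra hc
    push_neg at hc
    exact h (LinearMap.ext fun t => hc t)
  obtain ⟨t, ht⟩ := h2
  exact ⟨t, z1 _ ht⟩

lemma tr_surj {m : ℕ} {w : GaloisField 2 (2*m)} (hw : w ≠ 0) :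
    ∃ z, tr m (w*z) = 1 := by
  obtain ⟨t, ht⟩ := exists_tr_one m
  refine ⟨w⁻¹ * t, ?_⟩
  rw [← mul_assoc, mul_inv_cancel₀ hw, one_mul, ht]

lemma tr_eq_zero_of_all {m : ℕ} {w : GaloisField 2 (2*m)}
    (h : ∀ z, tr m (w*z) = 0) : w = 0 := by
  by_contra hw
  obtain ⟨z, hz⟩ := tr_surj hw
  rw [h z] at hz
  exact absurd hz (by decide)

-- sum reindexing
lemma sum_shift {α : Type*} [Fintype α] [AddCommGroup α] (g : α → ℤ) (t : α) :
    ∑ z, g (z + t) = ∑ z, g z :=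
  Fintype.sum_equiv (Equiv.addRight t) _ _ (fun _ => rfl)

-- weight as a sum
lemma wt_eq_sum {m : ℕ} (c : GaloisField 2 (2*m) → ZMod 2) :
    wt m c = ∑ z, (c z).val := by
  classical
  rw [wt, Set.ncard_eq_toFinset_card', Set.toFinset_setOf, Finset.card_filter]
  refine Finset.sum_congr rfl fun z _ => ?_
  by_cases h : c z = 0
  · simp [h]
  · simp [h, z1 _ h, zval1]

lemma cap_eq_sum {m : ℕ} (u v : GaloisField 2 (2*m) → ZMod 2) :
    (supp m u ∩ supp m v).ncard = ∑ z, ((u z) * (v z)).val := by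
  classical
  have hset : supp m u ∩ supp m v = {x | u x ≠ 0 ∧ v x ≠ 0} := rfl
  rw [hset, Set.ncard_eq_toFinset_card', Set.toFinset_setOf, Finset.card_filter]
  refine Finset.sum_congr rfl fun z _ => ?_
  rcases (show u z = 0 ∨ u z = 1 by rcases z1 (u z) with h; by_cases h : u z = 0; exact Or.inl h; exact Or.inr (z1 _ h)) with h | h <;>
    rcases (show v z = 0 ∨ v z = 1 by by_cases h' : v z = 0; exact Or.inl h'; exact Or.inr (z1 _ h')) with h' | h' <;>
    simp [h, h', zval1]

lemma sum_sign_eq {m : ℕ} (hm : m ≠ 0) (c : GaloisField 2 (2*m) → ZMod 2) :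
    ∑ z, (-1:ℤ)^((c z).val) = 2^(2*m) - 2 * (wt m c : ℤ) := by
  have : ∀ z : GaloisField 2 (2*m), (-1:ℤ)^((c z).val) = 1 - 2*((c z).val : ℤ) :=
    fun z => z3 _
  rw [Finset.sum_congr rfl (fun z _ => this z), Finset.sum_sub_distrib]
  rw [wt_eq_sum]
  push_cast
  rw [Finset.sum_const, ← Finset.mul_sum]
  simp [Finset.card_univ, gf_card hm]

-- character sums
lemma sum_char_zero {m : ℕ} (hm : m ≠ 0) :
    ∑ w : GaloisField 2 (2*m), (-1:ℤ)^((tr m (w*0)).val) = 2^(2*m) := by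
  simp [tr_zero, Finset.card_univ, gf_card hm]

lemma sum_char_ne {m : ℕ} {t : GaloisField 2 (2*m)} (ht : t ≠ 0) :
    ∑ w, (-1:ℤ)^((tr m (w*t)).val) = 0 := by
  obtain ⟨z, hz⟩ := tr_surj ht
  have hz' : tr m (z*t) = 1 := by rwa [mul_comm] at hz
  set G : GaloisField 2 (2*m) → ℤ := fun w => (-1:ℤ)^((tr m (w*t)).val) with hG
  have h1 : ∑ w, G (w + z) = ∑ w, G w := sum_shift G z
  have h2 : ∀ w, G (w + z) = - G w := by
    intro w
    show (-1:ℤ)^((tr m ((w+z)*t)).val) = - (-1:ℤ)^((tr m (w*t)).val)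
    rw [add_mul, tr_add, z2, hz', zval1]
    ring
  rw [Finset.sum_congr rfl (fun w _ => h2 w), Finset.sum_neg_distrib] at h1
  linarith

-- the linear map w ↦ (x ↦ tr (w x))
def Lmap (m : ℕ) : GaloisField 2 (2*m) →ₗ[ZMod 2] (GaloisField 2 (2*m) → ZMod 2) where
  toFun w := fun x => tr m (w * x)
  map_add' a b := by
    funext x
    simp [add_mul, tr_add]
  map_smul' c w := by
    funext x
    show tr m ((c • w) * x) = c • tr m (w * x)
    rw [smul_mul_assoc]
    exact map_smul (Algebra.trace (ZMod 2) (GaloisField 2 (2*m))) c (w*x)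

lemma code_decomp {m ℓ : ℕ} {f : Fin ℓ → GaloisField 2 (2*m) → ZMod 2}
    {c : GaloisField 2 (2*m) → ZMod 2} (hc : c ∈ code m ℓ f) :
    ∃ (a : Fin ℓ → ZMod 2) (w : GaloisField 2 (2*m)) (ε : ZMod 2),
      c = fun z => (∑ j, a j * f j z) + tr m (w*z) + ε := by
  classical
  rw [code, Submodule.span_union, Submodule.span_union] at hc
  obtain ⟨p, hp, q, hq, hpq⟩ := Submodule.mem_sup.mp hc
  obtain ⟨p1, hp1, p2, hp2, hp12⟩ := Submodule.mem_sup.mp hp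
  -- p1 ∈ span of range f
  rw [Submodule.mem_span_range_iff_exists_fun] at hp1
  obtain ⟨a, ha⟩ := hp1
  -- p2 ∈ span of range of Lmap
  have hrange : Set.range (fun w => fun x => tr m (w * x)) = ↑(LinearMap.range (Lmap m)) := by
    rw [LinearMap.coe_range]
    rfl
  rw [hrange, Submodule.span_eq] at hp2
  obtain ⟨w, hw⟩ := hp2
  -- q ∈ span {1}
  rw [Submodule.mem_span_singleton] at hq
  obtain ⟨ε, hε⟩ := hq
  refine ⟨a, w, ε, ?_⟩
  funext z
  have := congrFun hpq z
  rw [← this, ← hp12]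
  have h1 : p1 z = ∑ j, a j * f j z := by
    rw [← ha]
    simp
  have h2 : p2 z = tr m (w*z) := by rw [← hw]; rfl
  have h3 : q z = ε := by rw [← hε]; simp
  simp only [Pi.add_apply, h1, h2, h3]

lemma code_mem_affine {m ℓ : ℕ} {f : Fin ℓ → GaloisField 2 (2*m) → ZMod 2}
    {u : GaloisField 2 (2*m) → ZMod 2} (hu : u ∈ code m ℓ f)
    (w : GaloisField 2 (2*m)) (ε : ZMod 2) :
    (fun z => u z + tr m (w*z) + ε) ∈ code m ℓ f := by
  have h1 : (fun z => tr m (w*z)) ∈ code m ℓ f :=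
    Submodule.subset_span (Or.inl (Or.inr ⟨w, rfl⟩))
  have h2 : (fun _ => (1:ZMod 2)) ∈ code m ℓ f :=
    Submodule.subset_span (Or.inr rfl)
  have := Submodule.add_mem _ (Submodule.add_mem _ hu h1) (Submodule.smul_mem _ ε h2)
  convert this using 1
  funext z
  simp [mul_comm]

lemma z10 : ∀ a : ZMod 2, a = 0 ∨ a = 1 := by decide

lemma z9 : ∀ e : ZMod 2, |(-1:ℤ)^e.val| = 1 := by decide

lemma pow_int_lt {m : ℕ} (hm : 2 ≤ m) : (2:ℤ)^m < 2^(2*m) := by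
  apply pow_lt_pow_right₀ one_lt_two
  omega

lemma hSu_lemma {m : ℕ} (hm : 2 ≤ m) {u : GaloisField 2 (2*m) → ZMod 2}
    (hwu : wt m u = 2^(2*m-1) - 2^(m-1)) :
    ∑ z, (-1:ℤ)^((u z).val) = 2^m := by
  have h1 : (2:ℕ)^(m-1) ≤ 2^(2*m-1) := Nat.pow_le_pow_right (by norm_num) (by omega)
  have hcast : ((wt m u : ℤ)) = 2^(2*m-1) - 2^(m-1) := by
    rw [hwu]
    push_cast [h1]
    ring
  rw [sum_sign_eq (by omega) u, hcast]
  have e1 : (2:ℤ)^(2*m) = 2*2^(2*m-1) := by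
    rw [← pow_succ']
    congr 1
    omega
  have e2 : (2:ℤ)^m = 2*2^(m-1) := by
    rw [← pow_succ']
    congr 1
    omega
  rw [e1, e2]
  ring

lemma walsh_abs {m ℓ : ℕ} (hm : 2 ≤ m) {f : Fin ℓ → GaloisField 2 (2*m) → ZMod 2}
    (hf : IsBentVectorial m ℓ f) {u : GaloisField 2 (2*m) → ZMod 2}
    (hu : u ∈ code m ℓ f) (hwu : wt m u = 2^(2*m-1) - 2^(m-1)) :
    ∀ w, |∑ z, (-1:ℤ)^((u z + tr m (w*z)).val)| = 2^m := by
  obtain ⟨a, w0, ε0, hdec⟩ := code_decomp hu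
  have hSu : ∑ z, (-1:ℤ)^((u z).val) = 2^m := hSu_lemma hm hwu
  have ha : a ≠ 0 := by
    intro h
    subst h
    have hu' : ∀ z, u z = tr m (w0*z) + ε0 := by
      intro z
      rw [hdec]
      simp
    by_cases hw0 : w0 = 0
    · have : ∀ z, u z = ε0 := by
        intro z
        rw [hu', hw0, zero_mul, tr_zero, zero_add]
      rw [Finset.sum_congr rfl (fun z _ => by rw [this z])] at hSu
      rw [Finset.sum_const, Finset.card_univ, gf_card (show m ≠ 0 by omega),
        nsmul_eq_mul] at hSu
      push_cast at hSu
      have hlt := pow_int_lt hm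
      have hp1 : (0:ℤ) < 2^m := by positivity
      have hp2 : (0:ℤ) < 2^(2*m) := by positivity
      rcases z10 ε0 with he | he <;> rw [he] at hSu
      · norm_num at hSu
        linarith
      · rw [zval1] at hSu
        norm_num at hSu
        linarith
    · have hch : ∑ z, (-1:ℤ)^((tr m (z*w0)).val) = 0 := sum_char_ne hw0
      have : ∑ z, (-1:ℤ)^((u z).val) = (∑ z, (-1:ℤ)^((tr m (z*w0)).val)) * (-1)^(ε0.val) := by
        rw [Finset.sum_mul]
        refine Finset.sum_congr rfl fun z _ => ?_
        rw [hu' z, z2, mul_comm w0 z]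
      rw [this, hch, zero_mul] at hSu
      have : (0:ℤ) < 2^m := by positivity
      omega
  intro w
  have hb := hf a ha (w0 + w)
  have key : ∀ z, u z + tr m (w*z) = ((∑ j, a j * f j z) + tr m ((w0+w)*z)) + ε0 := by
    intro z
    have h1 : u z = (∑ j, a j * f j z) + tr m (w0*z) + ε0 := by rw [hdec]
    rw [h1, add_mul, tr_add]
    ring
  have : ∑ z, (-1:ℤ)^((u z + tr m (w*z)).val)
      = (∑ z, (-1:ℤ)^(((∑ j, a j * f j z) + tr m ((w0+w)*z)).val)) * (-1)^(ε0.val) := by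
    rw [Finset.sum_mul]
    refine Finset.sum_congr rfl fun z _ => ?_
    rw [key z, z2]
  rw [this, abs_mul, z9, mul_one]
  simpa using hb

lemma fourierGF {m : ℕ} (hm : 2 ≤ m) (u : GaloisField 2 (2*m) → ZMod 2)
    (z0 : GaloisField 2 (2*m)) :
    ∑ w, ((-1:ℤ)^((tr m (w*z0)).val) * ∑ z, (-1:ℤ)^((u z + tr m (w*z)).val))
      = 2^(2*m) * (-1)^((u z0).val) := by
  classical
  have step : ∀ w, (-1:ℤ)^((tr m (w*z0)).val) * ∑ z, (-1:ℤ)^((u z + tr m (w*z)).val)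
      = ∑ z, (-1:ℤ)^((u z).val) * (-1:ℤ)^((tr m (w*(z0+z))).val) := by
    intro w
    rw [Finset.mul_sum]
    refine Finset.sum_congr rfl fun z _ => ?_
    rw [z2, mul_add, tr_add, z2]
    ring
  rw [Finset.sum_congr rfl (fun w _ => step w), Finset.sum_comm]
  have inner : ∀ z, ∑ w, (-1:ℤ)^((u z).val) * (-1:ℤ)^((tr m (w*(z0+z))).val)
      = (-1:ℤ)^((u z).val) * (if z = z0 then (2^(2*m):ℤ) else 0) := by
    intro z
    rw [← Finset.mul_sum]
    congr 1
    by_cases hz : z = z0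
    · rw [if_pos hz, hz]
      have h0 : z0 + z0 = 0 := gf_add_self z0
      rw [Finset.sum_congr rfl (fun w _ => by rw [h0])]
      exact sum_char_zero (by omega)
    · rw [if_neg hz]
      apply sum_char_ne
      intro hc
      apply hz
      have h1 : z0 = -z := eq_neg_of_add_eq_zero_left hc
      have h2 : -z = z := by
        rw [neg_eq_iff_add_eq_zero]
        exact gf_add_self z
      rw [h1, h2]
  rw [Finset.sum_congr rfl (fun z _ => inner z)]
  simp only [mul_ite, mul_zero]
  rw [Finset.sum_ite_eq' Finset.univ z0 (fun z => (-1:ℤ)^((u z).val) * 2^(2*m))]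
  simp [mul_comm]

lemma z11 : ∀ e : ZMod 2, (-1:ℤ)^e.val * (-1)^e.val = 1 := by decide
lemma z12 : ∀ e1 e2 : ZMod 2, (-1:ℤ)^e1.val = (-1)^e2.val → e1 = e2 := by decide

lemma gf_eq_of_add_eq_zero {m : ℕ} {a b : GaloisField 2 (2*m)} (h : a + b = 0) : b = a := by
  have h1 : a = -b := eq_neg_of_add_eq_zero_left h
  have h2 : -b = b := by
    rw [neg_eq_iff_add_eq_zero]
    exact gf_add_self b
  rw [h1, h2]

lemma wt_iff {m : ℕ} (hm : 2 ≤ m) (c : GaloisField 2 (2*m) → ZMod 2) :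
    wt m c = 2^(2*m-1) - 2^(m-1) ↔ ∑ z, (-1:ℤ)^((c z).val) = 2^m := by
  have h1 : (2:ℕ)^(m-1) ≤ 2^(2*m-1) := Nat.pow_le_pow_right (by norm_num) (by omega)
  have e1 : (2:ℤ)^(2*m) = 2*2^(2*m-1) := by rw [← pow_succ']; congr 1; omega
  have e2 : (2:ℤ)^m = 2*2^(m-1) := by rw [← pow_succ']; congr 1; omega
  have hcast : ((2^(2*m-1) - 2^(m-1) : ℕ) : ℤ) = (2:ℤ)^(2*m-1) - 2^(m-1) := by
    push_cast [h1]; ring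
  constructor
  · exact hSu_lemma hm
  · intro h
    rw [sum_sign_eq (by omega) c] at h
    have : (wt m c : ℤ) = ((2^(2*m-1) - 2^(m-1) : ℕ) : ℤ) := by
      rw [hcast]; linarith
    exact_mod_cast this

lemma cap_lemma {m : ℕ} (hm : 2 ≤ m) (u v : GaloisField 2 (2*m) → ZMod 2)
    (hsu : ∑ z, (-1:ℤ)^((u z).val) = 2^m) (hsv : ∑ z, (-1:ℤ)^((v z).val) = 2^m)
    (hsuv : ∑ z, (-1:ℤ)^((u z + v z).val) = 0) :
    (supp m u ∩ supp m v).ncard = 2^(2*m-2) - 2^(m-1) := by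
  have h1 : (2:ℕ)^(m-1) ≤ 2^(2*m-2) := Nat.pow_le_pow_right (by norm_num) (by omega)
  have e1 : (2:ℤ)^(2*m) = 4*2^(2*m-2) := by
    rw [show (4:ℤ) = 2^2 by norm_num, ← pow_add]; congr 1; omega
  have e2 : (2:ℤ)^m = 2*2^(m-1) := by rw [← pow_succ']; congr 1; omega
  have key : (4:ℤ) * ∑ z, (((u z)*(v z)).val : ℤ)
      = ∑ z, (1-(-1:ℤ)^((u z).val))*(1-(-1)^((v z).val)) := by
    rw [Finset.mul_sum]
    exact Finset.sum_congr rfl fun z _ => z5 _ _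
  have expand : ∀ z : GaloisField 2 (2*m), (1-(-1:ℤ)^((u z).val))*(1-(-1)^((v z).val))
      = 1 - (-1:ℤ)^((u z).val) - (-1)^((v z).val) + (-1)^((u z + v z).val) := by
    intro z; rw [z2]; ring
  rw [Finset.sum_congr rfl (fun z _ => expand z)] at key
  rw [Finset.sum_add_distrib, Finset.sum_sub_distrib, Finset.sum_sub_distrib,
    Finset.sum_const, Finset.card_univ, gf_card (show m ≠ 0 by omega),
    hsu, hsv, hsuv, nsmul_eq_mul] at key
  push_cast at key
  have hcap : ((supp m u ∩ supp m v).ncard : ℤ) = ∑ z, (((u z)*(v z)).val : ℤ) := by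
    rw [cap_eq_sum]; push_cast; rfl
  have hfin : ((supp m u ∩ supp m v).ncard : ℤ) = ((2^(2*m-2) - 2^(m-1) : ℕ) : ℤ) := by
    have hcast : ((2^(2*m-2) - 2^(m-1) : ℕ) : ℤ) = (2:ℤ)^(2*m-2) - 2^(m-1) := by
      push_cast [h1]; ring
    rw [hcap, hcast]; linarith
  exact_mod_cast hfin

lemma suv_lemma {m : ℕ} (hm : 2 ≤ m) (u v : GaloisField 2 (2*m) → ZMod 2)
    (hwu : wt m u = 2^(2*m-1)-2^(m-1)) (hwv : wt m v = 2^(2*m-1)-2^(m-1))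
    (hcap : (supp m u ∩ supp m v).ncard = 2^(2*m-2)-2^(m-1)) :
    ∑ z, (-1:ℤ)^((u z + v z).val) = 0 := by
  have h1 : (2:ℕ)^(m-1) ≤ 2^(2*m-1) := Nat.pow_le_pow_right (by norm_num) (by omega)
  have h2 : (2:ℕ)^(m-1) ≤ 2^(2*m-2) := Nat.pow_le_pow_right (by norm_num) (by omega)
  have e1 : (2:ℤ)^(2*m) = 2*2^(2*m-1) := by rw [← pow_succ']; congr 1; omega
  have e3 : (2:ℤ)^(2*m-1) = 2*2^(2*m-2) := by rw [← pow_succ']; congr 1; omega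
  have hwsum : (wt m (fun z => u z + v z) : ℤ)
      = (wt m u : ℤ) + (wt m v : ℤ) - 2*((supp m u ∩ supp m v).ncard : ℤ) := by
    rw [wt_eq_sum, wt_eq_sum, wt_eq_sum, cap_eq_sum]
    push_cast
    rw [← Finset.sum_add_distrib, Finset.mul_sum, ← Finset.sum_sub_distrib]
    exact Finset.sum_congr rfl fun z _ => z4 _ _
  rw [hwu, hwv, hcap] at hwsum
  have hcast1 : ((2^(2*m-1) - 2^(m-1) : ℕ) : ℤ) = (2:ℤ)^(2*m-1) - 2^(m-1) := by
    push_cast [h1]; ring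
  have hcast2 : ((2^(2*m-2) - 2^(m-1) : ℕ) : ℤ) = (2:ℤ)^(2*m-2) - 2^(m-1) := by
    push_cast [h2]; ring
  rw [hcast1, hcast2] at hwsum
  rw [sum_sign_eq (show m ≠ 0 by omega)]
  rw [hwsum]
  linarith

set_option maxHeartbeats 1000000

/-- the derived design of the design supported by the minimum
weight codewords of `C(f_1, …, f_ℓ)` with respect to a block `B = supp u` is a
`2-(2^(2m-1) - 2^(m-1), 2^(2m-2) - 2^(m-1), 2^(2m-2) - 2^(m-1) - 1)` design. -/
theorem stmt_9 (m ℓ : ℕ) (hm : 2 ≤ m) (hℓ1 : 1 ≤ ℓ) (hℓm : ℓ ≤ m)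
    (f : Fin ℓ → GaloisField 2 (2*m) → ZMod 2) (hf : IsBentVectorial m ℓ f)
    (u : GaloisField 2 (2*m) → ZMod 2)
    (hu : u ∈ code m ℓ f) (hwu : wt m u = 2^(2*m-1) - 2^(m-1)) :
    ∀ x y : GaloisField 2 (2*m), x ∈ supp m u → y ∈ supp m u → x ≠ y →
      {v | v ∈ code m ℓ f ∧ wt m v = 2^(2*m-1) - 2^(m-1) ∧
          (supp m u ∩ supp m v).ncard = 2^(2*m-2) - 2^(m-1) ∧
          x ∈ supp m v ∧ y ∈ supp m v}.ncard =
        2^(2*m-2) - 2^(m-1) - 1 := by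
  intro x y hx hy hxy
  classical
  have hm0 : m ≠ 0 := by omega
  have hW := walsh_abs hm hf hu hwu
  have hSu : ∑ z, (-1:ℤ)^((u z).val) = 2^m := hSu_lemma hm hwu
  have hux : u x = 1 := z1 _ hx
  have huy : u y = 1 := z1 _ hy
  have hxy0 : x + y ≠ 0 := fun hc => hxy (gf_eq_of_add_eq_zero hc).symm
  set Wu : GaloisField 2 (2*m) → ℤ :=
    fun w => ∑ z, (-1:ℤ)^((u z + tr m (w*z)).val) with hWud
  set Ax : GaloisField 2 (2*m) → ℤ :=
    fun w => (-1)^((tr m (w*x)).val) * Wu w with hAxd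
  set Ay : GaloisField 2 (2*m) → ℤ :=
    fun w => (-1)^((tr m (w*y)).val) * Wu w with hAyd
  set V : GaloisField 2 (2*m) → (GaloisField 2 (2*m) → ZMod 2) :=
    fun w => fun z => u z + tr m (w*z) + tr m (w*x) with hVd
  have hWabs : ∀ w, |Wu w| = 2^m := hW
  have hWne : ∀ w, Wu w ≠ 0 := by
    intro w hc
    have h := hWabs w
    rw [hc, abs_zero] at h
    have hp : (0:ℤ) < 2^m := by positivity
    linarith
  have hSV : ∀ w, ∑ z, (-1:ℤ)^((V w z).val) = Ax w := by
    intro w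
    show ∑ z, (-1:ℤ)^(((u z + tr m (w*z)) + tr m (w*x)).val)
        = (-1:ℤ)^((tr m (w*x)).val) * ∑ z, (-1:ℤ)^((u z + tr m (w*z)).val)
    rw [Finset.mul_sum]
    refine Finset.sum_congr rfl fun z _ => ?_
    rw [z2]
    ring
  have habsx : ∀ w, |Ax w| = 2^m := by
    intro w
    show |(-1:ℤ)^((tr m (w*x)).val) * Wu w| = 2^m
    rw [abs_mul, z9, one_mul]
    exact hWabs w
  have habsy : ∀ w, |Ay w| = 2^m := by
    intro w
    show |(-1:ℤ)^((tr m (w*y)).val) * Wu w| = 2^m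
    rw [abs_mul, z9, one_mul]
    exact hWabs w
  have hAx_or : ∀ w, Ax w = 2^m ∨ Ax w = -2^m :=
    fun w => (abs_eq (by positivity)).mp (habsx w)
  have hAy_or : ∀ w, Ay w = 2^m ∨ Ay w = -2^m :=
    fun w => (abs_eq (by positivity)).mp (habsy w)
  set T : Set (GaloisField 2 (2*m)) := {w | w ≠ 0 ∧ Ax w = 2^m ∧ Ay w = 2^m} with hTd
  have himg : {v | v ∈ code m ℓ f ∧ wt m v = 2^(2*m-1) - 2^(m-1) ∧
          (supp m u ∩ supp m v).ncard = 2^(2*m-2) - 2^(m-1) ∧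
          x ∈ supp m v ∧ y ∈ supp m v} = V '' T := by
    ext v
    simp only [Set.mem_setOf_eq, Set.mem_image, hTd]
    constructor
    · rintro ⟨hvc, hvw, hvcap, hvx, hvy⟩
      obtain ⟨a, w0, ε0, hdu⟩ := code_decomp hu
      obtain ⟨b, w1, ε1, hdv⟩ := code_decomp hvc
      have hu' : ∀ z, u z = (∑ j, a j * f j z) + tr m (w0*z) + ε0 := fun z => by rw [hdu]
      have hv' : ∀ z, v z = (∑ j, b j * f j z) + tr m (w1*z) + ε1 := fun z => by rw [hdv]
      have hvx1 : v x = 1 := z1 _ hvx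
      have hvy1 : v y = 1 := z1 _ hvy
      have hSc : ∑ z, (-1:ℤ)^((u z + v z).val) = 0 := suv_lemma hm u v hwu hvw hvcap
      have hcomb : ∀ z, u z + v z
          = (∑ j, (a j + b j) * f j z) + tr m ((w0+w1)*z) + (ε0+ε1) := by
        intro z
        rw [hu' z, hv' z]
        have hs : ∑ j, (a j + b j) * f j z
            = (∑ j, a j * f j z) + ∑ j, b j * f j z := by
          rw [← Finset.sum_add_distrib]
          exact Finset.sum_congr rfl fun j _ => add_mul _ _ _
        rw [hs, add_mul, tr_add]
        ring
      have hab : ∀ j, a j + b j = 0 := by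
        by_contra hne'
        push_neg at hne'
        obtain ⟨j0, hj0⟩ := hne'
        have hfun : (fun j => a j + b j) ≠ 0 := fun hc => hj0 (congrFun hc j0)
        have hb := hf (fun j => a j + b j) hfun (w0 + w1)
        have hb' : |∑ z, (-1:ℤ)^(((∑ j, (a j + b j) * f j z) + tr m ((w0+w1)*z)).val)|
            = 2^m := by simpa using hb
        have hsplit : ∑ z, (-1:ℤ)^((u z + v z).val)
            = (∑ z, (-1:ℤ)^(((∑ j, (a j + b j) * f j z) + tr m ((w0+w1)*z)).val))
              * (-1)^((ε0+ε1).val) := by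
          rw [Finset.sum_mul]
          refine Finset.sum_congr rfl fun z _ => ?_
          rw [hcomb z, z2]
        have h0 : (∑ z, (-1:ℤ)^(((∑ j, (a j + b j) * f j z) + tr m ((w0+w1)*z)).val))
            * (-1)^((ε0+ε1).val) = 0 := by rw [← hsplit]; exact hSc
        rcases mul_eq_zero.mp h0 with h | h
        · rw [h, abs_zero] at hb'
          have : (0:ℤ) < 2^m := by positivity
          linarith
        · rcases z10 (ε0+ε1) with he | he <;> rw [he] at h <;> norm_num [zval1] at h
      have hba : b = a := funext fun j => z7 _ _ (hab j)
      subst hba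
      have hcz : ∀ z, u z + v z = tr m ((w0+w1)*z) + (ε0+ε1) := by
        intro z
        rw [hcomb z]
        have hz0 : ∀ j : Fin ℓ, b j + b j = 0 := fun j => z6 _
        rw [Finset.sum_congr rfl (fun j _ => by rw [hz0 j, zero_mul]),
          Finset.sum_const_zero, zero_add]
      have hvz : ∀ z, v z = u z + tr m ((w0+w1)*z) + (ε0+ε1) := by
        intro z
        have h := hcz z
        have h2 : u z + (u z + v z) = v z := by
          have h6 := z6 (u z)
          linear_combination h6
        rw [← h2, h]
        ring
      have hw'ne : (w0+w1) ≠ 0 := by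
        intro hc
        have hconst : ∀ z : GaloisField 2 (2*m), u z + v z = ε0 + ε1 := by
          intro z
          rw [hcz z, hc, zero_mul, tr_zero, zero_add]
        rw [Finset.sum_congr rfl (fun z _ => by rw [hconst z]),
          Finset.sum_const, Finset.card_univ, gf_card hm0, nsmul_eq_mul] at hSc
        have hp : (0:ℤ) < 2^(2*m) := by positivity
        push_cast at hSc
        rcases z10 (ε0+ε1) with he | he <;> rw [he] at hSc
        · norm_num at hSc
        · rw [zval1] at hSc
          norm_num at hSc
      have hε : ε0 + ε1 = tr m ((w0+w1)*x) := by
        have h := hvz x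
        rw [hvx1, hux] at h
        have h2 : tr m ((w0+w1)*x) + (ε0+ε1) = 0 := by linear_combination -h
        exact z7 _ _ h2
      have hveq : V (w0+w1) = v := by
        funext z
        show u z + tr m ((w0+w1)*z) + tr m ((w0+w1)*x) = v z
        rw [hvz z, ← hε]
      have hAxw' : Ax (w0+w1) = 2^m := by
        rw [← hSV (w0+w1), show V (w0+w1) = v from hveq]
        exact (wt_iff hm v).mp hvw
      have htyx : tr m ((w0+w1)*y) = tr m ((w0+w1)*x) := by
        have h := hvz y
        rw [hvy1, huy] at h
        have h2 : tr m ((w0+w1)*y) + (ε0+ε1) = 0 := by linear_combination -h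
        have h3 : ε0 + ε1 = tr m ((w0+w1)*y) := z7 _ _ h2
        rw [← h3, ← hε]
      have hAyw' : Ay (w0+w1) = 2^m := by
        show (-1:ℤ)^((tr m ((w0+w1)*y)).val) * Wu (w0+w1) = 2^m
        rw [htyx]
        exact hAxw'
      exact ⟨w0+w1, ⟨hw'ne, hAxw', hAyw'⟩, hveq⟩
    · rintro ⟨w, ⟨hwne, hAxw, hAyw⟩, rfl⟩
      have hSv : ∑ z, (-1:ℤ)^((V w z).val) = 2^m := by rw [hSV w]; exact hAxw
      have hwtv : wt m (V w) = 2^(2*m-1) - 2^(m-1) := (wt_iff hm (V w)).mpr hSv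
      have hkey : ∀ z, u z + V w z = tr m (w*z) + tr m (w*x) := by
        intro z
        show u z + (u z + tr m (w*z) + tr m (w*x)) = _
        have h6 := z6 (u z)
        linear_combination h6
      have hsuv : ∑ z, (-1:ℤ)^((u z + V w z).val) = 0 := by
        rw [Finset.sum_congr rfl (fun z _ => by rw [hkey z])]
        have h : ∑ z, (-1:ℤ)^((tr m (w*z) + tr m (w*x)).val)
            = (∑ z, (-1:ℤ)^((tr m (z*w)).val)) * (-1)^((tr m (w*x)).val) := by
          rw [Finset.sum_mul]
          refine Finset.sum_congr rfl fun z _ => ?_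
          rw [z2, mul_comm z w]
        rw [h, sum_char_ne hwne, zero_mul]
      have hcap : (supp m u ∩ supp m (V w)).ncard = 2^(2*m-2) - 2^(m-1) :=
        cap_lemma hm u (V w) hSu hSv hsuv
      have hVx : V w x = u x := by
        show u x + tr m (w*x) + tr m (w*x) = u x
        rw [add_assoc, z6, add_zero]
      have htxy : tr m (w*y) = tr m (w*x) := by
        have h1 : (-1:ℤ)^((tr m (w*y)).val) * Wu w
            = (-1)^((tr m (w*x)).val) * Wu w := by
          show Ay w = Ax w
          rw [hAxw, hAyw]
        exact z12 _ _ (mul_right_cancel₀ (hWne w) h1)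
      have hVy : V w y = u y := by
        show u y + tr m (w*y) + tr m (w*x) = u y
        rw [htxy, add_assoc, z6, add_zero]
      refine ⟨code_mem_affine hu w (tr m (w*x)), hwtv, hcap, ?_, ?_⟩
      · show V w x ≠ 0
        rw [hVx, hux]
        exact one_ne_zero
      · show V w y ≠ 0
        rw [hVy, huy]
        exact one_ne_zero
  have hinj : Set.InjOn V T := by
    intro w1 _ w2 _ hV12
    have hpt : ∀ z, tr m (w1*z) + tr m (w1*x) = tr m (w2*z) + tr m (w2*x) := by
      intro z
      have h := congrFun hV12 z
      have h2 : u z + (tr m (w1*z) + tr m (w1*x))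
          = u z + (tr m (w2*z) + tr m (w2*x)) := by
        show _ = _
        linear_combination h
      exact add_left_cancel h2
    have h0 : tr m (w1*x) = tr m (w2*x) := by
      have h := hpt 0
      rw [mul_zero, mul_zero, tr_zero, zero_add, zero_add] at h
      exact h
    have hall : ∀ z, tr m ((w1+w2)*z) = 0 := by
      intro z
      rw [add_mul, tr_add]
      have h := hpt z
      rw [h0] at h
      have h2 : tr m (w1*z) = tr m (w2*z) := add_right_cancel h
      rw [h2]
      exact z6 _
    exact (gf_eq_of_add_eq_zero (tr_eq_zero_of_all hall)).symm
  rw [himg, Set.ncard_image_of_injOn hinj]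
  set Q : Finset (GaloisField 2 (2*m)) :=
    Finset.univ.filter (fun w => Ax w = 2^m ∧ Ay w = 2^m) with hQd
  have hT : T = (↑Q : Set (GaloisField 2 (2*m))) \ {0} := by
    ext w
    simp only [hTd, Set.mem_setOf_eq, Set.mem_diff, Set.mem_singleton_iff,
      Finset.coe_filter, Finset.mem_coe, Finset.mem_filter, Finset.mem_univ, true_and, hQd]
    tauto
  have hW0 : Wu 0 = 2^m := by
    show ∑ z, (-1:ℤ)^((u z + tr m (0*z)).val) = 2^m
    rw [Finset.sum_congr rfl (fun z _ => by rw [zero_mul, tr_zero, add_zero])]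
    exact hSu
  have h0Q : (0 : GaloisField 2 (2*m)) ∈ Q := by
    rw [hQd, Finset.mem_filter]
    refine ⟨Finset.mem_univ _, ?_, ?_⟩
    · show (-1:ℤ)^((tr m (0*x)).val) * Wu 0 = 2^m
      rw [zero_mul, tr_zero, hW0]
      norm_num
    · show (-1:ℤ)^((tr m (0*y)).val) * Wu 0 = 2^m
      rw [zero_mul, tr_zero, hW0]
      norm_num
  have hsum1 : ∑ w, Ax w = -2^(2*m) := by
    have h := fourierGF hm u x
    rw [hux, zval1] at h
    simpa using h
  have hsum2 : ∑ w, Ay w = -2^(2*m) := by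
    have h := fourierGF hm u y
    rw [huy, zval1] at h
    simpa using h
  have hsum3 : ∑ w, Ax w * Ay w = 0 := by
    have hterm : ∀ w, Ax w * Ay w = (-1:ℤ)^((tr m (w*(x+y))).val) * 2^(2*m) := by
      intro w
      show ((-1:ℤ)^((tr m (w*x)).val) * Wu w) * ((-1)^((tr m (w*y)).val) * Wu w) = _
      have hsq : Wu w * Wu w = 2^(2*m) := by
        have h := hWabs w
        have h2 : Wu w * Wu w = |Wu w| * |Wu w| := (abs_mul_abs_self _).symm
        rw [h2, h, ← pow_add]
        congr 1
        omega
      have htr : tr m (w*(x+y)) = tr m (w*x) + tr m (w*y) := by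
        rw [mul_add, tr_add]
      rw [htr, z2, ← hsq]
      ring
    rw [Finset.sum_congr rfl (fun w _ => hterm w), ← Finset.sum_mul]
    have h : ∑ w, (-1:ℤ)^((tr m (w*(x+y))).val) = 0 := sum_char_ne hxy0
    rw [h, zero_mul]
  have hprod : ∑ w, ((2:ℤ)^m + Ax w) * (2^m + Ay w) = 2^(2*m+2) * Q.card := by
    rw [← Finset.sum_filter_add_sum_filter_not Finset.univ
      (fun w => Ax w = 2^m ∧ Ay w = 2^m) (fun w => ((2:ℤ)^m + Ax w) * (2^m + Ay w))]
    have hA : ∑ w ∈ Q, ((2:ℤ)^m + Ax w) * (2^m + Ay w) = Q.card * 2^(2*m+2) := by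
      have hterm : ∀ w ∈ Q, ((2:ℤ)^m + Ax w) * (2^m + Ay w) = 2^(2*m+2) := by
        intro w hw
        rw [hQd, Finset.mem_filter] at hw
        rw [hw.2.1, hw.2.2]
        have h1 : (2:ℤ)^m + 2^m = 2^(m+1) := by rw [pow_succ]; ring
        rw [h1, ← pow_add]
        congr 1
        omega
      rw [Finset.sum_congr rfl hterm, Finset.sum_const, nsmul_eq_mul]
    have hB : ∑ w ∈ Finset.univ.filter (fun w => ¬(Ax w = 2^m ∧ Ay w = 2^m)),
        ((2:ℤ)^m + Ax w) * (2^m + Ay w) = 0 := by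
      apply Finset.sum_eq_zero
      intro w hw
      rw [Finset.mem_filter] at hw
      rcases hAx_or w with h1 | h1
      · rcases hAy_or w with h2 | h2
        · exact absurd ⟨h1, h2⟩ hw.2
        · rw [h2]; ring
      · rw [h1]; ring
    rw [← hQd, hA, hB, add_zero, mul_comm]
  have htot : (2:ℤ)^(2*m+2) * Q.card = 2^(2*m)*2^(2*m) - 2*(2^m*2^(2*m)) := by
    rw [← hprod]
    have hterm : ∀ w, ((2:ℤ)^m + Ax w) * (2^m + Ay w)
        = 2^m*2^m + 2^m*Ay w + 2^m*Ax w + Ax w*Ay w := fun w => by ring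
    rw [Finset.sum_congr rfl (fun w _ => hterm w)]
    rw [Finset.sum_add_distrib, Finset.sum_add_distrib, Finset.sum_add_distrib]
    have e1 : ∑ _w : GaloisField 2 (2*m), (2:ℤ)^m*2^m = 2^(2*m) * 2^(2*m) := by
      rw [Finset.sum_const, Finset.card_univ, gf_card hm0, nsmul_eq_mul]
      push_cast
      congr 1
      rw [← pow_add]
      congr 1
      omega
    have e2 : ∑ w, (2:ℤ)^m * Ay w = 2^m * ∑ w, Ay w := by rw [Finset.mul_sum]
    have e3 : ∑ w, (2:ℤ)^m * Ax w = 2^m * ∑ w, Ax w := by rw [Finset.mul_sum]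
    rw [e1, e2, e3, hsum1, hsum2, hsum3]
    ring
  have h1' : (2:ℕ)^(m-1) ≤ 2^(2*m-2) := Nat.pow_le_pow_right (by norm_num) (by omega)
  have hQcard : Q.card = 2^(2*m-2) - 2^(m-1) := by
    have hcastQ : ((2^(2*m-2) - 2^(m-1) : ℕ) : ℤ) = (2:ℤ)^(2*m-2) - 2^(m-1) := by
      push_cast [h1']
      ring
    have P1 : (2:ℤ)^(2*m-2) * 2^(2*m+2) = 2^(2*m) * 2^(2*m) := by
      rw [← pow_add, ← pow_add]
      congr 1
      omega
    have P2 : (2:ℤ)^(m-1) * 2^(2*m+2) = 2 * (2^m * 2^(2*m)) := by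
      have h3 : (2:ℤ) * ((2:ℤ)^m * 2^(2*m)) = 2^(1 + (m + 2*m)) := by
        rw [pow_add, pow_add, pow_one]
      rw [h3, ← pow_add]
      congr 1
      omega
    have hne : (2:ℤ)^(2*m+2) ≠ 0 := by positivity
    have hgoal : (Q.card : ℤ) = ((2^(2*m-2) - 2^(m-1) : ℕ) : ℤ) := by
      apply mul_right_cancel₀ hne
      rw [hcastQ, sub_mul, P1, P2]
      linarith
    exact_mod_cast hgoal
  rw [hT, Set.ncard_diff_singleton_of_mem (by exact_mod_cast h0Q),
    Set.ncard_coe_finset, hQcard]
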